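/- arXiv:2305.04093 — 4 statements merged into one kernel-verified Lean document; each statement's English description precedes it below -/
import Mathlib

section
/- Let α and Φ be positive integers and let K : {1, 2, …, Φ} → ℕ be a sequence of natural numbers with K_φ ≤ α for every φ. Let m ∈ {1, …, Φ} be an index maximizing K_φ · 2^φ (i.e., K_φ · 2^φ ≤ K_m · 2^m for all φ ∈ {1, …, Φ}). Then ∑_{φ=1}^{Φ} K_φ · 2^φ ≤ (log₂(α) + 3) · K_m · 2^m, where log₂ denotes the real base-2 logarithm. -/
/-!
Let `M` bound every term `K φ * 2 ^ φ` and let `L = ⌊log₂ M⌋`, `a = ⌈log₂ α⌉`. A term with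
`φ > L` vanishes, since already `2 ^ φ > M`. The terms with `φ + a ≤ L` are at most `2 ^ (φ + a)`,
so together they are less than `2 ^ (L + 1) ≤ 2 M`. The remaining exponents lie in
`[L + 1 - a, L]`, so there are at most `a` of them, each contributing at most `M`. Hence the sum
is at most `(a + 2) M ≤ (log₂ α + 3) M`.
-/

open Finset

namespace Nat

variable {b : ℕ} {s : Finset ℕ} {K : ℕ → ℕ} {a M : ℕ}

lemma eq_zero_of_mul_pow_le_of_log_lt (hb : 1 < b) {k i : ℕ} (hk : k * b ^ i ≤ M)
    (hi : log b M < i) : k = 0 := by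
  by_contra hk0
  have hMi : M < b ^ i :=
    (lt_pow_succ_log_self hb M).trans_le (pow_le_pow_right₀ hb.le hi)
  exact (hMi.trans_le (le_mul_of_one_le_left' (one_le_iff_ne_zero.2 hk0))).not_ge hk

lemma sum_mul_pow_lt_pow_succ_log (hb : 1 < b) (hK : ∀ i ∈ s, K i ≤ b ^ a)
    (hs : ∀ i ∈ s, i + a ≤ log b M) : ∑ i ∈ s, K i * b ^ i < b ^ (log b M + 1) :=
  calc ∑ i ∈ s, K i * b ^ i
      ≤ ∑ i ∈ s, b ^ (i + a) :=
        sum_le_sum fun i hi => by rw [pow_add, mul_comm]; gcongr; exact hK i hi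
    _ = ∑ e ∈ s.map (addRightEmbedding a), b ^ e := by
        simp only [sum_map, addRightEmbedding_apply]
    _ < b ^ (log b M + 1) := geomSum_lt hb <| by
        simp only [mem_map, addRightEmbedding_apply]
        rintro _ ⟨i, hi, rfl⟩
        exact lt_succ_of_le (hs i hi)

lemma sum_mul_pow_le_card_mul (hM : ∀ i ∈ s, K i * b ^ i ≤ M)
    (hs : ∀ i ∈ s, log b M < i + a ∧ i ≤ log b M) : ∑ i ∈ s, K i * b ^ i ≤ a * M :=
  calc ∑ i ∈ s, K i * b ^ i
      ≤ #s * M := by simpa using sum_le_sum hM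
    _ ≤ #(Icc (log b M + 1 - a) (log b M)) * M := by
        gcongr
        intro i hi
        have := hs i hi
        simp only [mem_Icc]
        omega
    _ ≤ a * M := by
        gcongr
        rw [card_Icc]
        omega

theorem sum_mul_pow_le (hb : 1 < b) (hK : ∀ i ∈ s, K i ≤ b ^ a)
    (hM : ∀ i ∈ s, K i * b ^ i ≤ M) : ∑ i ∈ s, K i * b ^ i ≤ (a + b) * M := by
  rcases eq_or_ne M 0 with rfl | hM0
  · simp_all
  set L := log b M
  set t := s.filter (· ≤ L)
  have hle : ∑ i ∈ t, K i * b ^ i = ∑ i ∈ s, K i * b ^ i :=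
    sum_filter_of_ne fun i hi hne => by
      by_contra hiL
      exact hne (by rw [eq_zero_of_mul_pow_le_of_log_lt hb (hM i hi) (not_le.1 hiL), zero_mul])
  rw [← hle, ← sum_filter_add_sum_filter_not t (fun i => i + a ≤ L)]
  have hlow : ∑ i ∈ t with i + a ≤ L, K i * b ^ i ≤ b * M :=
    calc _ ≤ b ^ (L + 1) := (sum_mul_pow_lt_pow_succ_log hb
            (fun i hi => hK i (mem_of_mem_filter i (mem_of_mem_filter i hi)))
            (fun i hi => (mem_filter.1 hi).2)).le
      _ = b * b ^ L := _root_.pow_succ' b L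
      _ ≤ b * M := by gcongr; exact pow_log_le_self b hM0
  have hhigh : ∑ i ∈ t with ¬ i + a ≤ L, K i * b ^ i ≤ a * M :=
    sum_mul_pow_le_card_mul (fun i hi => hM i (mem_of_mem_filter i (mem_of_mem_filter i hi)))
      fun i hi => by
        simp only [t, mem_filter] at hi
        omega
  linarith

end Nat

theorem Nat.cast_clog_lt_logb_add_one (b n : ℕ) : (clog b n : ℝ) < Real.logb b n + 1 := by
  rw [← Real.natCeil_logb_natCast]
  exact Nat.ceil_lt_add_one (div_nonneg (Real.log_natCast_nonneg n) (Real.log_natCast_nonneg b))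

theorem stmt_0_general (α Φ : ℕ) (K : ℕ → ℕ)
    (hK : ∀ φ ∈ Finset.Icc 1 Φ, K φ ≤ α)
    (m : ℕ)
    (hmax : ∀ φ ∈ Finset.Icc 1 Φ, K φ * 2 ^ φ ≤ K m * 2 ^ m) :
    (∑ φ ∈ Finset.Icc 1 Φ, (K φ : ℝ) * 2 ^ φ)
      ≤ (Real.logb 2 α + 3) * ((K m : ℝ) * 2 ^ m) := by
  have hsum : ∑ φ ∈ Icc 1 Φ, K φ * 2 ^ φ ≤ (Nat.clog 2 α + 2) * (K m * 2 ^ m) :=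
    Nat.sum_mul_pow_le one_lt_two
      (fun φ hφ => (hK φ hφ).trans (Nat.le_pow_clog one_lt_two α)) hmax
  have hclog := Nat.cast_clog_lt_logb_add_one 2 α
  push_cast at hclog
  calc (∑ φ ∈ Icc 1 Φ, (K φ : ℝ) * 2 ^ φ)
      ≤ ((Nat.clog 2 α : ℝ) + 2) * ((K m : ℝ) * 2 ^ m) := by exact_mod_cast hsum
    _ ≤ (Real.logb 2 α + 3) * ((K m : ℝ) * 2 ^ m) := by gcongr ?_ * _; linarith

theorem stmt_0 (α Φ : ℕ) (hα : 0 < α) (hΦ : 0 < Φ) (K : ℕ → ℕ)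
    (hK : ∀ φ ∈ Finset.Icc 1 Φ, K φ ≤ α)
    (m : ℕ) (hm : m ∈ Finset.Icc 1 Φ)
    (hmax : ∀ φ ∈ Finset.Icc 1 Φ, K φ * 2 ^ φ ≤ K m * 2 ^ m) :
    (∑ φ ∈ Finset.Icc 1 Φ, (K φ : ℝ) * 2 ^ φ)
      ≤ (Real.logb 2 α + 3) * ((K m : ℝ) * 2 ^ m) :=
  stmt_0_general α Φ K hK m hmax
end

section
/- Let K and α be positive integers with K ≤ α, let n be a natural number, and let k : {1, 2, …, n} → ℕ satisfy k_j ≤ α and k_j ≤ K · 2^j for every j ∈ {1, …, n}. Then, with sums taken in the reals, ∑_{j=1}^{n} k_j · 2^{−j} ≤ (⌈log₂(α / K)⌉ + 1) · K, where ⌈·⌉ is the ceiling and log₂ is the real base-2 logarithm. -/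
lemma geom_tail (m : ℕ) : ∀ n, m ≤ n →
    ∑ j ∈ Finset.Icc (m+1) n, (2:ℝ) ^ (-(j:ℤ)) ≤ (2:ℝ) ^ (-(m:ℤ)) - (2:ℝ) ^ (-(n:ℤ)) := by
  intro n
  induction n with
  | zero => intro h; interval_cases m; simp
  | succ n ih =>
    intro h
    rcases Nat.lt_or_ge m (n+1) with h' | h'
    · have hmn : m ≤ n := Nat.lt_succ_iff.mp h'
      rw [Finset.sum_Icc_succ_top (by omega : m + 1 ≤ n + 1)]
      have h1 := ih hmn
      have h2 : (2:ℝ) ^ (-((n:ℤ)+1)) = (2:ℝ) ^ (-(n:ℤ)) / 2 := by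
        rw [neg_add, zpow_add₀ (two_ne_zero)]
        norm_num
        ring
      push_cast
      push_cast at h1
      linarith
    · have hm : m = n + 1 := by omega
      subst hm
      simp

theorem stmt_2 (K α : ℕ) (hK : 0 < K) (hKα : K ≤ α) (n : ℕ) (k : ℕ → ℕ)
    (hkα : ∀ j ∈ Finset.Icc 1 n, k j ≤ α)
    (hkK : ∀ j ∈ Finset.Icc 1 n, k j ≤ K * 2 ^ j) :
    ∑ j ∈ Finset.Icc 1 n, (k j : ℝ) * 2 ^ (-(j : ℤ))
      ≤ ((⌈Real.logb 2 ((α : ℝ) / K)⌉ : ℝ) + 1) * K := by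
  have hK0 : (0:ℝ) < K := by exact_mod_cast hK
  have hx : (1:ℝ) ≤ (α:ℝ)/K := by
    rw [le_div_iff₀ hK0, one_mul]; exact_mod_cast hKα
  set c := ⌈Real.logb 2 ((α : ℝ) / K)⌉ with hcdef
  have hc0 : 0 ≤ c := Int.ceil_nonneg (Real.logb_nonneg one_lt_two hx)
  set m := c.toNat with hmdef
  have hmc : (c:ℝ) = (m:ℝ) := by
    rw [hmdef]; exact_mod_cast (Int.toNat_of_nonneg hc0).symm
  have hαm : (α:ℝ) ≤ K * 2 ^ m := by
    have h1 : Real.logb 2 ((α:ℝ)/K) ≤ (m:ℝ) := by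
      rw [← hmc]; exact Int.le_ceil _
    have hx0 : (0:ℝ) < (α:ℝ)/K := lt_of_lt_of_le one_pos hx
    have h2 := (Real.logb_le_iff_le_rpow one_lt_two hx0).mp h1
    rw [Real.rpow_natCast] at h2
    rw [div_le_iff₀ hK0] at h2
    linarith [h2]
  -- each term is ≤ K
  have hterm : ∀ j ∈ Finset.Icc 1 n, (k j : ℝ) * 2 ^ (-(j:ℤ)) ≤ K := by
    intro j hj
    have h1 : (k j : ℝ) ≤ (K : ℝ) * 2 ^ j := by exact_mod_cast hkK j hj
    have h2 : (0:ℝ) < (2:ℝ) ^ (-(j:ℤ)) := zpow_pos two_pos _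
    have h3 : ((K : ℝ) * 2 ^ j) * 2 ^ (-(j:ℤ)) = K := by
      rw [mul_assoc, ← zpow_natCast (2:ℝ) j, ← zpow_add₀ (two_ne_zero : (2:ℝ) ≠ 0)]
      simp
    calc (k j : ℝ) * 2 ^ (-(j:ℤ)) ≤ ((K:ℝ) * 2 ^ j) * 2 ^ (-(j:ℤ)) := by
          exact mul_le_mul_of_nonneg_right h1 (le_of_lt h2)
      _ = K := h3
  rcases Nat.lt_or_ge n (m+1) with hnm | hnm
  · -- n ≤ m : every term ≤ K, at most n ≤ m terms
    calc ∑ j ∈ Finset.Icc 1 n, (k j : ℝ) * 2 ^ (-(j:ℤ))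
        ≤ ∑ j ∈ Finset.Icc 1 n, (K:ℝ) := Finset.sum_le_sum hterm
      _ = (n : ℝ) * K := by rw [Finset.sum_const]; simp [Nat.card_Icc]
      _ ≤ ((c:ℝ) + 1) * K := by
          have : (n:ℝ) ≤ (m:ℝ) := by exact_mod_cast Nat.lt_succ_iff.mp hnm
          have := hmc
          nlinarith
  · -- m < n : split
    have hsplit : Finset.Icc 1 n = Finset.Icc 1 m ∪ Finset.Icc (m+1) n := by
      ext x; simp only [Finset.mem_Icc, Finset.mem_union]; omega
    have hdisj : Disjoint (Finset.Icc 1 m) (Finset.Icc (m+1) n) := by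
      simp [Finset.disjoint_left]; omega
    rw [hsplit, Finset.sum_union hdisj]
    have hsub1 : Finset.Icc 1 m ⊆ Finset.Icc 1 n := Finset.Icc_subset_Icc_right (by omega)
    have hsub2 : Finset.Icc (m+1) n ⊆ Finset.Icc 1 n := Finset.Icc_subset_Icc_left (by omega)
    have hS1 : ∑ j ∈ Finset.Icc 1 m, (k j : ℝ) * 2 ^ (-(j:ℤ)) ≤ (m:ℝ) * K := by
      calc ∑ j ∈ Finset.Icc 1 m, (k j : ℝ) * 2 ^ (-(j:ℤ))
          ≤ ∑ j ∈ Finset.Icc 1 m, (K:ℝ) :=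
            Finset.sum_le_sum fun j hj => hterm j (hsub1 hj)
        _ = (m : ℝ) * K := by rw [Finset.sum_const]; simp [Nat.card_Icc]
    have hS2 : ∑ j ∈ Finset.Icc (m+1) n, (k j : ℝ) * 2 ^ (-(j:ℤ)) ≤ (K:ℝ) := by
      have hgeom := geom_tail m n (by omega)
      have hapos : (0:ℝ) ≤ (α:ℝ) := Nat.cast_nonneg _
      calc ∑ j ∈ Finset.Icc (m+1) n, (k j : ℝ) * 2 ^ (-(j:ℤ))
          ≤ ∑ j ∈ Finset.Icc (m+1) n, (α:ℝ) * 2 ^ (-(j:ℤ)) := by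
            apply Finset.sum_le_sum
            intro j hj
            exact mul_le_mul_of_nonneg_right (by exact_mod_cast hkα j (hsub2 hj))
              (le_of_lt (zpow_pos two_pos _))
        _ = (α:ℝ) * ∑ j ∈ Finset.Icc (m+1) n, (2:ℝ) ^ (-(j:ℤ)) := by
            rw [Finset.mul_sum]
        _ ≤ (α:ℝ) * (2:ℝ) ^ (-(m:ℤ)) := by
            have hn0 : (0:ℝ) < (2:ℝ) ^ (-(n:ℤ)) := zpow_pos two_pos _
            nlinarith
        _ ≤ (K:ℝ) := by
            have hmp : (0:ℝ) < (2:ℝ) ^ (-(m:ℤ)) := zpow_pos two_pos _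
            have h3 : (K:ℝ) * 2 ^ m * (2:ℝ) ^ (-(m:ℤ)) = K := by
              rw [mul_assoc, ← zpow_natCast (2:ℝ) m, ← zpow_add₀ (two_ne_zero : (2:ℝ) ≠ 0)]
              simp
            calc (α:ℝ) * (2:ℝ) ^ (-(m:ℤ)) ≤ (K:ℝ) * 2 ^ m * (2:ℝ) ^ (-(m:ℤ)) :=
                  mul_le_mul_of_nonneg_right hαm (le_of_lt hmp)
              _ = K := h3
    calc _ ≤ (m:ℝ) * K + (K:ℝ) := add_le_add hS1 hS2
      _ = ((c:ℝ) + 1) * K := by rw [hmc]; ring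
end

section
/- Let G be a finite simple graph with vertex set [K] = {1, …, K}, K ≥ 1, with independence number α (the maximum cardinality of an independent set of G). Let Δ : [K] → ℝ satisfy 0 < Δ_a ≤ 1 for every vertex a. For each positive integer φ let G_φ be the subgraph of G induced by the vertex set S_φ = {a ∈ [K] : 2^{−φ} < Δ_a ≤ 2^{−φ+1}}, and let M_φ = max over independent sets I of G_φ of ∑_{a∈I} 2^{φ} (with M_φ = 0 if S_φ is empty). Then for every positive integer Φ, ∑_{φ=1}^{Φ} M_φ ≤ 2 (log₂(α) + 3) · max over independent sets I of G of ∑_{a∈I} 1/Δ_a, where log₂ denotes the real base-2 logarithm. -/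
/-!
Let `I_φ` be a maximum independent set of the layer `G_φ`, so `M_φ = |I_φ| 2^φ`. Since
`2^φ ≤ 2 / Δ_a` on the layer and `I_φ` is independent in `G`, every `M_φ` is at most `2M`, where
`M` is the right-hand maximum. The layer sum is then controlled by its largest term `C`: only
layers with `2^φ ≤ C` contribute, i.e. `φ ≤ p := log₂ C`; the at most `log₂ α + 1` layers with
`p - log₂ α ≤ φ ≤ p` contribute at most `C` each, and the lower layers contribute at most
`α 2^φ < 2^(φ + log₂ α + 1)` each, a geometric series bounded by `2^(p+1) ≤ 2C`.
-/

open Finset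

theorem Nat.sum_mul_two_pow_le_log_add_three_mul {s : Finset ℕ} {k : ℕ → ℕ} {α C : ℕ}
    (hkα : ∀ φ ∈ s, k φ ≤ α) (hkC : ∀ φ ∈ s, k φ * 2 ^ φ ≤ C) :
    ∑ φ ∈ s, k φ * 2 ^ φ ≤ (Nat.log 2 α + 3) * C := by
  rcases Nat.eq_zero_or_pos C with rfl | hC
  · exact (sum_eq_zero fun φ hφ => Nat.le_zero.mp (hkC φ hφ)).le
  set p := Nat.log 2 C
  set L := Nat.log 2 α
  have hsupport : ∀ φ ∈ s, k φ * 2 ^ φ ≠ 0 → φ ≤ p := fun φ hφ hne =>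
    Nat.le_log_of_pow_le one_lt_two <|
      (Nat.le_mul_of_pos_left _ (Nat.pos_of_ne_zero (left_ne_zero_of_mul hne))).trans (hkC φ hφ)
  set t := s.filter (· ≤ p)
  have hlow : ∑ φ ∈ t with φ < p - L, k φ * 2 ^ φ ≤ 2 * C := by
    rcases Nat.eq_zero_or_pos (p - L) with h0 | hpos
    · simp [h0]
    calc ∑ φ ∈ t with φ < p - L, k φ * 2 ^ φ
        ≤ ∑ φ ∈ t with φ < p - L, α * 2 ^ φ :=
          sum_le_sum fun φ hφ =>
            Nat.mul_le_mul_right _ (hkα φ (mem_filter.mp (mem_filter.mp hφ).1).1)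
      _ = α * ∑ φ ∈ t with φ < p - L, 2 ^ φ := (mul_sum _ _ _).symm
      _ ≤ α * 2 ^ (p - L) := by
          gcongr; exact (Nat.geomSum_lt le_rfl fun φ hφ => (mem_filter.mp hφ).2).le
      _ ≤ 2 ^ (L + 1) * 2 ^ (p - L) := by
          gcongr; exact (Nat.lt_pow_succ_log_self one_lt_two α).le
      _ = 2 * 2 ^ p := by rw [← pow_add, ← pow_succ']; congr 1; omega
      _ ≤ 2 * C := by gcongr; exact Nat.pow_log_le_self 2 hC.ne'
  have hwindow : ∑ φ ∈ t with ¬φ < p - L, k φ * 2 ^ φ ≤ (L + 1) * C := by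
    have hcard : #{φ ∈ t | ¬φ < p - L} ≤ L + 1 := by
      calc #{φ ∈ t | ¬φ < p - L} ≤ #(Icc (p - L) p) := card_le_card fun φ hφ => by
            simp only [t, mem_filter, mem_Icc] at hφ ⊢; omega
        _ ≤ L + 1 := by simp; omega
    calc ∑ φ ∈ t with ¬φ < p - L, k φ * 2 ^ φ ≤ #{φ ∈ t | ¬φ < p - L} * C :=
          sum_le_card_nsmul _ _ _ fun φ hφ => hkC φ (mem_filter.mp (mem_filter.mp hφ).1).1
      _ ≤ (L + 1) * C := by gcongr
  calc ∑ φ ∈ s, k φ * 2 ^ φ = ∑ φ ∈ t, k φ * 2 ^ φ := (sum_filter_of_ne hsupport).symm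
    _ = ∑ φ ∈ t with φ < p - L, k φ * 2 ^ φ + ∑ φ ∈ t with ¬φ < p - L, k φ * 2 ^ φ :=
        (sum_filter_add_sum_filter_not _ _ _).symm
    _ ≤ 2 * C + (L + 1) * C := add_le_add hlow hwindow
    _ = (L + 3) * C := by ring

theorem two_pow_le_two_div_of_le_zpow {d : ℝ} {φ : ℕ} (hd : 0 < d)
    (h : d ≤ (2 : ℝ) ^ (-(φ : ℤ) + 1)) : (2 : ℝ) ^ φ ≤ 2 / d := by
  rw [le_div_iff₀ hd]
  calc (2 : ℝ) ^ φ * d ≤ 2 ^ φ * 2 ^ (-(φ : ℤ) + 1) := by gcongr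
    _ = 2 := by
      rw [zpow_add₀ two_ne_zero, zpow_neg, zpow_natCast, mul_inv_cancel_left₀ (by positivity),
        zpow_one]

namespace SimpleGraph

variable {V : Type*} (G : SimpleGraph V)

noncomputable def layerIndepMax (Δ : V → ℝ) (φ : ℕ) : ℝ :=
  sSup {x | ∃ I : Finset V, (∀ a ∈ I, Δ a ∈ Set.Ioc ((2 : ℝ) ^ (-(φ : ℤ))) (2 ^ (-(φ : ℤ) + 1))) ∧
    G.IsIndepSet I ∧ x = ∑ _a ∈ I, (2 : ℝ) ^ φ}

noncomputable def indepWeightMax (w : V → ℝ) : ℝ :=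
  sSup {x | ∃ I : Finset V, G.IsIndepSet I ∧ x = ∑ a ∈ I, w a}

variable [Fintype V]

theorem exists_layerIndepMax_eq (Δ : V → ℝ) (φ : ℕ) :
    ∃ I : Finset V, (∀ a ∈ I, Δ a ∈ Set.Ioc ((2 : ℝ) ^ (-(φ : ℤ))) (2 ^ (-(φ : ℤ) + 1))) ∧
      G.IsIndepSet I ∧ G.layerIndepMax Δ φ = #I * 2 ^ φ := by
  set S := {x | ∃ I : Finset V,
    (∀ a ∈ I, Δ a ∈ Set.Ioc ((2 : ℝ) ^ (-(φ : ℤ))) (2 ^ (-(φ : ℤ) + 1))) ∧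
    G.IsIndepSet I ∧ x = ∑ _a ∈ I, (2 : ℝ) ^ φ}
  have hne : S.Nonempty := ⟨0, ∅, by simp, by simp, by simp⟩
  have hfin : S.Finite := (Set.finite_range fun I : Finset V => ∑ _a ∈ I, (2 : ℝ) ^ φ).subset
    (by rintro _ ⟨I, -, -, rfl⟩; exact ⟨I, rfl⟩)
  obtain ⟨I, hlayer, hind, hmax⟩ := hne.csSup_mem hfin
  exact ⟨I, hlayer, hind, by rw [layerIndepMax, hmax, sum_const, nsmul_eq_mul]⟩

theorem sum_le_indepWeightMax {w : V → ℝ} {I : Finset V} (hI : G.IsIndepSet I) :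
    ∑ a ∈ I, w a ≤ G.indepWeightMax w :=
  le_csSup ((Set.finite_range fun I : Finset V => ∑ a ∈ I, w a).subset
    (by rintro _ ⟨I, -, rfl⟩; exact ⟨I, rfl⟩)).bddAbove ⟨I, hI, rfl⟩

theorem card_mul_two_pow_le_two_mul_indepWeightMax {Δ : V → ℝ} {φ : ℕ} {I : Finset V}
    (hΔ : ∀ a ∈ I, 0 < Δ a) (hlayer : ∀ a ∈ I, Δ a ≤ (2 : ℝ) ^ (-(φ : ℤ) + 1))
    (hI : G.IsIndepSet I) :
    #I * (2 : ℝ) ^ φ ≤ 2 * G.indepWeightMax fun a => 1 / Δ a :=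
  calc #I * (2 : ℝ) ^ φ = ∑ _a ∈ I, (2 : ℝ) ^ φ := by rw [sum_const, nsmul_eq_mul]
    _ ≤ ∑ a ∈ I, 2 / Δ a :=
        sum_le_sum fun a ha => two_pow_le_two_div_of_le_zpow (hΔ a ha) (hlayer a ha)
    _ = 2 * ∑ a ∈ I, 1 / Δ a := by rw [mul_sum]; simp only [mul_one_div]
    _ ≤ 2 * G.indepWeightMax fun a => 1 / Δ a := by gcongr; exact G.sum_le_indepWeightMax hI

end SimpleGraph

open SimpleGraph in
theorem stmt_8_general (K : ℕ) (G : SimpleGraph (Fin K)) (Δ : Fin K → ℝ)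
    (hΔ : ∀ a, 0 < Δ a ∧ Δ a ≤ 1) (α : ℕ)
    (hα : IsGreatest
      {n : ℕ | ∃ J : Finset (Fin K), (∀ a ∈ J, ∀ b ∈ J, a ≠ b → ¬ G.Adj a b) ∧ J.card = n} α)
    (Φ : ℕ) :
    ∑ φ ∈ Finset.Icc 1 Φ,
        sSup {x : ℝ | ∃ I : Finset (Fin K),
          (∀ a ∈ I, (2 : ℝ) ^ (-(φ : ℤ)) < Δ a ∧ Δ a ≤ (2 : ℝ) ^ (-(φ : ℤ) + 1)) ∧
          (∀ a ∈ I, ∀ b ∈ I, a ≠ b → ¬ G.Adj a b) ∧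
          x = ∑ _a ∈ I, (2 : ℝ) ^ φ}
      ≤ 2 * (Real.logb 2 α + 3) *
        sSup {x : ℝ | ∃ I : Finset (Fin K),
          (∀ a ∈ I, ∀ b ∈ I, a ≠ b → ¬ G.Adj a b) ∧ x = ∑ a ∈ I, 1 / Δ a} := by
  change ∑ φ ∈ Icc 1 Φ, G.layerIndepMax Δ φ ≤
    2 * (Real.logb 2 α + 3) * G.indepWeightMax fun a => 1 / Δ a
  set M := G.indepWeightMax fun a => 1 / Δ a
  choose I hlayer hind hmax using G.exists_layerIndepMax_eq Δ
  have hM : 0 ≤ M := by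
    simpa only [sum_empty] using G.sum_le_indepWeightMax (w := fun a => 1 / Δ a) (I := ∅) (by simp)
  have hcard : ∀ φ, #(I φ) ≤ α := fun φ => hα.2 ⟨I φ, hind φ, rfl⟩
  -- layer values are integers, so they stay below `⌊2M⌋₊`
  have hC : ∀ φ, #(I φ) * 2 ^ φ ≤ ⌊2 * M⌋₊ := fun φ => Nat.le_floor <| by
    exact_mod_cast G.card_mul_two_pow_le_two_mul_indepWeightMax (fun a _ => (hΔ a).1)
      (fun a ha => (hlayer φ a ha).2) (hind φ)
  have hlog : (Nat.log 2 α : ℝ) ≤ Real.logb 2 α := by exact_mod_cast Real.natLog_le_logb α 2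
  calc ∑ φ ∈ Icc 1 Φ, G.layerIndepMax Δ φ = ((∑ φ ∈ Icc 1 Φ, #(I φ) * 2 ^ φ : ℕ) : ℝ) := by
        push_cast; exact sum_congr rfl fun φ _ => hmax φ
    _ ≤ ((Nat.log 2 α + 3) * ⌊2 * M⌋₊ : ℕ) := by
        exact_mod_cast Nat.sum_mul_two_pow_le_log_add_three_mul (fun φ _ => hcard φ)
          (fun φ _ => hC φ)
    _ ≤ (Real.logb 2 α + 3) * (2 * M) := by
        push_cast
        exact mul_le_mul (by linarith) (Nat.floor_le (by positivity)) (Nat.cast_nonneg _)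
          (by linarith [(Nat.cast_nonneg _ : (0 : ℝ) ≤ Nat.log 2 α)])
    _ = 2 * (Real.logb 2 α + 3) * M := by ring

theorem stmt_8 (K : ℕ) (hK : 1 ≤ K) (G : SimpleGraph (Fin K)) (Δ : Fin K → ℝ)
    (hΔ : ∀ a, 0 < Δ a ∧ Δ a ≤ 1) (α : ℕ)
    (hα : IsGreatest
      {n : ℕ | ∃ J : Finset (Fin K), (∀ a ∈ J, ∀ b ∈ J, a ≠ b → ¬ G.Adj a b) ∧ J.card = n} α)
    (Φ : ℕ) (hΦ : 0 < Φ) :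
    ∑ φ ∈ Finset.Icc 1 Φ,
        sSup {x : ℝ | ∃ I : Finset (Fin K),
          (∀ a ∈ I, (2 : ℝ) ^ (-(φ : ℤ)) < Δ a ∧ Δ a ≤ (2 : ℝ) ^ (-(φ : ℤ) + 1)) ∧
          (∀ a ∈ I, ∀ b ∈ I, a ≠ b → ¬ G.Adj a b) ∧
          x = ∑ _a ∈ I, (2 : ℝ) ^ φ}
      ≤ 2 * (Real.logb 2 α + 3) *
        sSup {x : ℝ | ∃ I : Finset (Fin K),
          (∀ a ∈ I, ∀ b ∈ I, a ≠ b → ¬ G.Adj a b) ∧ x = ∑ a ∈ I, 1 / Δ a} :=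
  stmt_8_general K G Δ hΔ α hα Φ
end

section
/- Let G be a finite simple graph with vertex set [K] = {1, …, K}, K ≥ 1, with independence number α, let L ≥ 0 be a real number, and let Δ : [K] → ℝ satisfy 0 < Δ_a ≤ 1 for every vertex a. For each positive integer φ let G_φ be the subgraph of G induced by S_φ = {a : 2^{−φ} < Δ_a ≤ 2^{−φ+1}}. Then for every positive integer Φ, ∑_{φ=1}^{Φ} max over independent sets I of G_φ of ∑_{a∈I} (L / 2^{−2φ}) · Δ_a ≤ 4 L (log₂(α) + 3) · max over independent sets I of G of ∑_{a∈I} 1/Δ_a, where log₂ is the real base-2 logarithm and the inner maxima over the empty family are 0. -/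
open Finset

theorem stmt_9 (K : ℕ) (hK : 1 ≤ K) (G : SimpleGraph (Fin K)) (L : ℝ) (hL : 0 ≤ L)
    (Δ : Fin K → ℝ) (hΔ : ∀ a, 0 < Δ a ∧ Δ a ≤ 1) (α : ℕ)
    (hα : IsGreatest
      {n : ℕ | ∃ J : Finset (Fin K), (∀ a ∈ J, ∀ b ∈ J, a ≠ b → ¬ G.Adj a b) ∧ J.card = n} α)
    (Φ : ℕ) (hΦ : 0 < Φ) :
    ∑ φ ∈ Finset.Icc 1 Φ,
        sSup {x : ℝ | ∃ I : Finset (Fin K),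
          (∀ a ∈ I, (2 : ℝ) ^ (-(φ : ℤ)) < Δ a ∧ Δ a ≤ (2 : ℝ) ^ (-(φ : ℤ) + 1)) ∧
          (∀ a ∈ I, ∀ b ∈ I, a ≠ b → ¬ G.Adj a b) ∧
          x = ∑ a ∈ I, (L / (2 : ℝ) ^ (-(2 * φ : ℤ))) * Δ a}
      ≤ 4 * L * (Real.logb 2 α + 3) *
        sSup {x : ℝ | ∃ I : Finset (Fin K),
          (∀ a ∈ I, ∀ b ∈ I, a ≠ b → ¬ G.Adj a b) ∧ x = ∑ a ∈ I, 1 / Δ a} := by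
  classical
  obtain ⟨⟨J₀, hJ₀indep, hJ₀card⟩, hαub⟩ := hα
  set RS : Set ℝ := {x : ℝ | ∃ I : Finset (Fin K),
      (∀ a ∈ I, ∀ b ∈ I, a ≠ b → ¬ G.Adj a b) ∧ x = ∑ a ∈ I, 1 / Δ a} with hRS
  have hbddR : BddAbove RS := by
    apply Set.Finite.bddAbove
    apply Set.Finite.subset (Set.finite_range (fun I : Finset (Fin K) => ∑ a ∈ I, 1 / Δ a))
    rintro x ⟨I, -, rfl⟩
    exact ⟨I, rfl⟩
  set M := sSup RS with hMdef
  have hmemR : ∀ I : Finset (Fin K), (∀ a ∈ I, ∀ b ∈ I, a ≠ b → ¬ G.Adj a b) →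
      ∑ a ∈ I, 1 / Δ a ≤ M := fun I hI => le_csSup hbddR ⟨I, hI, rfl⟩
  have hM0 : 0 ≤ M := by simpa using hmemR ∅ (by simp)
  have hα1 : 1 ≤ α := by
    refine hαub ⟨{⟨0, hK⟩}, ?_, by simp⟩
    intro a ha b hb hab
    simp only [mem_singleton] at ha hb
    exact absurd (ha.trans hb.symm) hab
  have hMα : (α : ℝ) ≤ M := by
    calc (α : ℝ) = ∑ _a ∈ J₀, (1 : ℝ) := by simp [hJ₀card]
      _ ≤ ∑ a ∈ J₀, 1 / Δ a := by
          refine sum_le_sum fun a _ => ?_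
          rw [le_div_iff₀ (hΔ a).1]
          simpa using (hΔ a).2
      _ ≤ M := hmemR J₀ hJ₀indep
  -- independence cardinality bound
  have hcard : ∀ I : Finset (Fin K), (∀ a ∈ I, ∀ b ∈ I, a ≠ b → ¬ G.Adj a b) →
      I.card ≤ α := fun I hI => hαub ⟨I, hI, rfl⟩
  -- notation for terms
  set T : ℕ → ℝ := fun φ => sSup {x : ℝ | ∃ I : Finset (Fin K),
      (∀ a ∈ I, (2 : ℝ) ^ (-(φ : ℤ)) < Δ a ∧ Δ a ≤ (2 : ℝ) ^ (-(φ : ℤ) + 1)) ∧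
      (∀ a ∈ I, ∀ b ∈ I, a ≠ b → ¬ G.Adj a b) ∧
      x = ∑ a ∈ I, (L / (2 : ℝ) ^ (-(2 * φ : ℤ))) * Δ a} with hT
  have h2ne : (2 : ℝ) ≠ 0 := two_ne_zero
  -- termwise bound: the summand is at most 2 * L * 2^φ
  have htermw : ∀ (φ : ℕ) (a : Fin K), Δ a ≤ (2 : ℝ) ^ (-(φ : ℤ) + 1) → 0 < Δ a →
      (L / (2 : ℝ) ^ (-(2 * φ : ℤ))) * Δ a ≤ 2 * L * (2 : ℝ) ^ φ := by
    intro φ a hle hpos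
    have hLe : L / (2 : ℝ) ^ (-(2 * φ : ℤ)) = L * (2 : ℝ) ^ ((2 * φ : ℤ)) := by
      rw [zpow_neg, div_eq_mul_inv, inv_inv]
    have hnn : 0 ≤ L * (2 : ℝ) ^ ((2 * φ : ℤ)) :=
      mul_nonneg hL (le_of_lt (zpow_pos two_pos _))
    calc (L / (2 : ℝ) ^ (-(2 * φ : ℤ))) * Δ a
        ≤ L * (2 : ℝ) ^ ((2 * φ : ℤ)) * (2 : ℝ) ^ (-(φ : ℤ) + 1) := by
          rw [hLe]; exact mul_le_mul_of_nonneg_left hle hnn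
      _ = 2 * L * (2 : ℝ) ^ φ := by
          rw [mul_assoc, ← zpow_add₀ h2ne]
          have : (2 * φ : ℤ) + (-(φ : ℤ) + 1) = (φ : ℤ) + 1 := by ring
          rw [this, zpow_add₀ h2ne, zpow_one, zpow_natCast]
          ring
  -- bucket membership gives 2^φ ≤ 2 / Δ a
  have hbucket_inv : ∀ (φ : ℕ) (a : Fin K), Δ a ≤ (2 : ℝ) ^ (-(φ : ℤ) + 1) →
      (2 : ℝ) ^ φ ≤ 2 * (1 / Δ a) := by
    intro φ a hle
    have hpos := (hΔ a).1
    have h1 : 1 / (2 : ℝ) ^ (-(φ : ℤ) + 1) ≤ 1 / Δ a :=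
      one_div_le_one_div_of_le hpos hle
    have h2 : (2 : ℝ) ^ φ = 2 * (1 / (2 : ℝ) ^ (-(φ : ℤ) + 1)) := by
      rw [one_div, ← zpow_neg, ← zpow_natCast (2:ℝ) φ]
      rw [show (2:ℝ) * (2:ℝ) ^ (-(-(φ:ℤ) + 1)) = (2:ℝ)^(1:ℤ) * (2:ℝ) ^ (-(-(φ:ℤ) + 1)) by norm_num]
      rw [← zpow_add₀ h2ne]
      congr 1
      ring
    rw [h2]
    nlinarith
  -- Bound 1: T φ ≤ 4 * L * M
  have hT1 : ∀ φ : ℕ, T φ ≤ 4 * L * M := by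
    intro φ
    refine Real.sSup_le ?_ (by positivity)
    rintro x ⟨I, hbk, hind, rfl⟩
    have hsum1 : ∑ a ∈ I, (L / (2 : ℝ) ^ (-(2 * φ : ℤ))) * Δ a
        ≤ ∑ a ∈ I, 4 * L * (1 / Δ a) := by
      refine sum_le_sum fun a ha => ?_
      have h1 := htermw φ a (hbk a ha).2 (hΔ a).1
      have h2 := hbucket_inv φ a (hbk a ha).2
      nlinarith
    calc ∑ a ∈ I, (L / (2 : ℝ) ^ (-(2 * φ : ℤ))) * Δ a
        ≤ ∑ a ∈ I, 4 * L * (1 / Δ a) := hsum1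
      _ = 4 * L * ∑ a ∈ I, 1 / Δ a := by rw [mul_sum]
      _ ≤ 4 * L * M := by
          refine mul_le_mul_of_nonneg_left (hmemR I hind) (by positivity)
  -- Bound 2: T φ ≤ 2 * L * α * 2^φ
  have hT2 : ∀ φ : ℕ, T φ ≤ 2 * L * α * (2 : ℝ) ^ φ := by
    intro φ
    refine Real.sSup_le ?_ (by positivity)
    rintro x ⟨I, hbk, hind, rfl⟩
    calc ∑ a ∈ I, (L / (2 : ℝ) ^ (-(2 * φ : ℤ))) * Δ a
        ≤ ∑ _a ∈ I, 2 * L * (2 : ℝ) ^ φ :=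
          sum_le_sum fun a ha => htermw φ a (hbk a ha).2 (hΔ a).1
      _ = (I.card : ℝ) * (2 * L * (2 : ℝ) ^ φ) := by
          rw [sum_const, nsmul_eq_mul]
      _ ≤ (α : ℝ) * (2 * L * (2 : ℝ) ^ φ) := by
          refine mul_le_mul_of_nonneg_right ?_ (by positivity)
          exact_mod_cast hcard I hind
      _ = 2 * L * α * (2 : ℝ) ^ φ := by ring
  -- Bound 3: empty bucket gives T φ ≤ 0
  have hT3 : ∀ φ : ℕ, (¬ ∃ a : Fin K, (2 : ℝ) ^ (-(φ : ℤ)) < Δ a ∧ Δ a ≤ (2 : ℝ) ^ (-(φ : ℤ) + 1)) →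
      T φ ≤ 0 := by
    intro φ hno
    refine Real.sSup_le ?_ le_rfl
    rintro x ⟨I, hbk, hind, rfl⟩
    rcases I.eq_empty_or_nonempty with rfl | ⟨a, ha⟩
    · simp
    · exact absurd ⟨a, hbk a ha⟩ hno
  -- nonneg of T? not needed; we need logb nonneg
  have hlogb0 : 0 ≤ Real.logb 2 α :=
    Real.logb_nonneg one_lt_two (by exact_mod_cast hα1)
  -- bucket set
  set A : Finset ℕ := (Finset.Icc 1 Φ).filter
    (fun φ => ∃ a : Fin K, (2 : ℝ) ^ (-(φ : ℤ)) < Δ a ∧ Δ a ≤ (2 : ℝ) ^ (-(φ : ℤ) + 1)) with hA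
  rcases A.eq_empty_or_nonempty with hAe | hAne
  · -- all terms vanish
    have : ∑ φ ∈ Finset.Icc 1 Φ, T φ ≤ 0 := by
      refine sum_nonpos fun φ hφ => hT3 φ ?_
      intro hex
      have : φ ∈ A := by rw [hA, mem_filter]; exact ⟨hφ, hex⟩
      simp [hAe] at this
    refine this.trans (by positivity)
  · set φm : ℕ := A.max' hAne with hφm
    have hφmA : φm ∈ A := A.max'_mem hAne
    have hφmIcc : φm ∈ Finset.Icc 1 Φ := (mem_filter.1 hφmA).1
    obtain ⟨a₀, ha₀⟩ := (mem_filter.1 hφmA).2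
    have hφm1 : 1 ≤ φm := (mem_Icc.1 hφmIcc).1
    have hφmΦ : φm ≤ Φ := (mem_Icc.1 hφmIcc).2
    -- M ≥ 2^(φm) / 2
    have hMφm : (2 : ℝ) ^ φm ≤ 2 * M := by
      have h1 : (2 : ℝ) ^ φm ≤ 2 * (1 / Δ a₀) := hbucket_inv φm a₀ ha₀.2
      have h2 : 1 / Δ a₀ ≤ M := by
        have := hmemR {a₀} (by
          intro a ha b hb hab
          simp only [mem_singleton] at ha hb
          exact absurd (ha.trans hb.symm) hab)
        simpa using this
      nlinarith
    set d : ℕ := Nat.clog 2 α + 1 with hd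
    set m : ℕ := φm - d with hm
    have hmφm : m ≤ φm := Nat.sub_le _ _
    -- α * 2^m ≤ M
    have hkey : (α : ℝ) * (2 : ℝ) ^ m ≤ M := by
      rcases le_or_gt d φm with hcase | hcase
      · have hαpow : (α : ℝ) ≤ (2 : ℝ) ^ (Nat.clog 2 α) := by
          exact_mod_cast Nat.le_pow_clog one_lt_two α
        have h1 : (α : ℝ) * (2 : ℝ) ^ m ≤ (2 : ℝ) ^ (Nat.clog 2 α) * (2 : ℝ) ^ m :=
          mul_le_mul_of_nonneg_right hαpow (by positivity)
        have h2 : (2 : ℝ) ^ (Nat.clog 2 α) * (2 : ℝ) ^ m = (2 : ℝ) ^ (Nat.clog 2 α + m) := by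
          rw [pow_add]
        have h3 : Nat.clog 2 α + m + 1 = φm := by omega
        have h4 : (2 : ℝ) ^ (Nat.clog 2 α + m) * 2 = (2 : ℝ) ^ φm := by
          rw [← h3, pow_succ]
        nlinarith [hMφm]
      · have hm0 : m = 0 := by omega
        rw [hm0]; simpa using hMα
    -- split the sum
    have hsplit : ∑ φ ∈ Finset.Icc 1 Φ, T φ =
        (∑ φ ∈ Finset.Ioc 0 m, T φ) + (∑ φ ∈ Finset.Ioc m φm, T φ) +
        (∑ φ ∈ Finset.Ioc φm Φ, T φ) := by
      rw [show Finset.Icc 1 Φ = Finset.Ioc 0 Φ from Finset.Icc_add_one_left_eq_Ioc 0 Φ]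
      rw [sum_Ioc_consecutive T (Nat.zero_le m) hmφm,
        sum_Ioc_consecutive T (Nat.zero_le φm) hφmΦ]
    -- geometric sum bound
    have hgeom : ∀ n : ℕ, ∑ φ ∈ Finset.Ioc 0 n, (2 : ℝ) ^ φ ≤ (2 : ℝ) ^ (n + 1) := by
      intro n
      induction n with
      | zero => simp
      | succ k ih =>
        rw [sum_Ioc_succ_top (Nat.zero_le k)]
        have : (2 : ℝ) ^ (k + 1) ≤ (2 : ℝ) ^ (k + 2) := by
          apply pow_le_pow_right₀ one_le_two; omega
        calc (∑ φ ∈ Finset.Ioc 0 k, (2:ℝ) ^ φ) + (2:ℝ) ^ (k+1)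
            ≤ (2:ℝ) ^ (k+1) + (2:ℝ) ^ (k+1) := by linarith
          _ = (2:ℝ) ^ (k+2) := by ring
    have hS1 : ∑ φ ∈ Finset.Ioc 0 m, T φ ≤ 4 * L * M := by
      calc ∑ φ ∈ Finset.Ioc 0 m, T φ
          ≤ ∑ φ ∈ Finset.Ioc 0 m, 2 * L * α * (2 : ℝ) ^ φ :=
            sum_le_sum fun φ _ => hT2 φ
        _ = 2 * L * α * ∑ φ ∈ Finset.Ioc 0 m, (2 : ℝ) ^ φ := by rw [mul_sum]
        _ ≤ 2 * L * α * (2 : ℝ) ^ (m + 1) := by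
            refine mul_le_mul_of_nonneg_left (hgeom m) (by positivity)
        _ = 4 * L * ((α : ℝ) * (2 : ℝ) ^ m) := by rw [pow_succ]; ring
        _ ≤ 4 * L * M := mul_le_mul_of_nonneg_left hkey (by positivity)
    have hS2 : ∑ φ ∈ Finset.Ioc m φm, T φ ≤ (d : ℝ) * (4 * L * M) := by
      calc ∑ φ ∈ Finset.Ioc m φm, T φ
          ≤ ∑ _φ ∈ Finset.Ioc m φm, 4 * L * M := sum_le_sum fun φ _ => hT1 φ
        _ = ((Finset.Ioc m φm).card : ℝ) * (4 * L * M) := by rw [sum_const, nsmul_eq_mul]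
        _ ≤ (d : ℝ) * (4 * L * M) := by
            refine mul_le_mul_of_nonneg_right ?_ (by positivity)
            rw [Nat.card_Ioc]
            exact_mod_cast Nat.cast_le.2 (by omega : φm - m ≤ d)
    have hS3 : ∑ φ ∈ Finset.Ioc φm Φ, T φ ≤ 0 := by
      refine sum_nonpos fun φ hφ => ?_
      rw [mem_Ioc] at hφ
      refine hT3 φ ?_
      intro hex
      have hφA : φ ∈ A := by
        rw [hA, mem_filter, mem_Icc]
        exact ⟨⟨by omega, hφ.2⟩, hex⟩
      have := A.le_max' φ hφA
      omega
    -- clog bound: (d : ℝ) ≤ logb 2 α + 2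
    have hclog : (d : ℝ) ≤ Real.logb 2 α + 2 := by
      rcases eq_or_lt_of_le hα1 with h1 | h1
      · have : Nat.clog 2 α = 0 := by rw [← h1]; simp
        rw [hd, this]
        simp; linarith
      · have hc1 : 1 ≤ Nat.clog 2 α := by
          have := Nat.clog_pos one_lt_two (by omega : 2 ≤ α)
          omega
        have hpow : (2 : ℕ) ^ (Nat.clog 2 α - 1) < α := Nat.pow_pred_clog_lt_self one_lt_two h1
        have hpowR : (2 : ℝ) ^ (Nat.clog 2 α - 1) < (α : ℝ) := by exact_mod_cast hpow
        have hlog : ((Nat.clog 2 α - 1 : ℕ) : ℝ) < Real.logb 2 α := by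
          have := Real.logb_lt_logb one_lt_two (by positivity : (0:ℝ) < (2:ℝ) ^ (Nat.clog 2 α - 1)) hpowR
          rwa [Real.logb_pow, Real.logb_self_eq_one one_lt_two, mul_one] at this
        have hcast : ((Nat.clog 2 α - 1 : ℕ) : ℝ) = (Nat.clog 2 α : ℝ) - 1 := by
          rw [Nat.cast_sub hc1]; norm_num
        rw [hd]
        push_cast
        rw [hcast] at hlog
        linarith
    calc ∑ φ ∈ Finset.Icc 1 Φ, T φ
        = (∑ φ ∈ Finset.Ioc 0 m, T φ) + (∑ φ ∈ Finset.Ioc m φm, T φ) +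
          (∑ φ ∈ Finset.Ioc φm Φ, T φ) := hsplit
      _ ≤ 4 * L * M + (d : ℝ) * (4 * L * M) + 0 := by
          exact add_le_add (add_le_add hS1 hS2) hS3
      _ = 4 * L * ((d : ℝ) + 1) * M := by ring
      _ ≤ 4 * L * (Real.logb 2 α + 3) * M := by
          have h1 : (d : ℝ) + 1 ≤ Real.logb 2 α + 3 := by linarith
          have := mul_le_mul_of_nonneg_right (mul_le_mul_of_nonneg_left h1 (by positivity : (0:ℝ) ≤ 4 * L)) hM0
          linarith [this]
end
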